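/- Fix r ≥ 1 and a sequence (γ_n)_{n∈ℕ} of nonzero complex numbers. Let H be the infinite matrix with H_{n,n+1} = 1 and H_{n+r,n} = γ_n for all n ∈ ℕ, and all other entries equal to 0. Then there exists no sequence (α_n)_{n∈ℕ} of complex numbers such that H = L_1 ⋯ L_r U entrywise, where L_1,…,L_r, U are the bidiagonal matrices built from (α_n). -/

import Mathlib

open Finset

noncomputable section

/-- The upper-bidiagonal matrix `U`: `U_{n,n} = α_{(r+1)n}`, `U_{n,n+1} = 1`. -/
def Umat (r : ℕ) (α : ℕ → ℂ) : ℕ → ℕ → ℂ := fun n ℓ =>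
  if ℓ = n then α ((r + 1) * n) else if ℓ = n + 1 then 1 else 0

/-- The lower-bidiagonal matrix `L_k`: `(L_k)_{n,n} = 1`, `(L_k)_{n+1,n} = α_{(r+1)n+k}`. -/
def Lmat (r k : ℕ) (α : ℕ → ℂ) : ℕ → ℕ → ℂ := fun n ℓ =>
  if ℓ = n then 1 else if n = ℓ + 1 then α ((r + 1) * ℓ + k) else 0

/-- Entrywise product (finite sum, as the left factors have row `n`
supported in columns `< n+2`). -/
def bidMul (X Y : ℕ → ℕ → ℂ) : ℕ → ℕ → ℂ := fun n ℓ =>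
  ∑ k ∈ Finset.range (n + 2), X n k * Y k ℓ

/-- Product of a list of such matrices. -/
def listProd : List (ℕ → ℕ → ℂ) → ℕ → ℕ → ℂ
  | [] => fun n ℓ => if n = ℓ then 1 else 0
  | X :: rest => bidMul X (listProd rest)

/-- The Hessenberg matrix `H = L_1 ⋯ L_r U`. -/
def Hprod (r : ℕ) (α : ℕ → ℂ) : ℕ → ℕ → ℂ :=
  listProd (((List.range' 1 r).map fun k => Lmat r k α) ++ [Umat r α])

lemma listProd_append_U (r : ℕ) (α : ℕ → ℂ) (Xs : List (ℕ → ℕ → ℂ)) (n : ℕ) :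
    listProd (Xs ++ [Umat r α]) n 0 = listProd Xs n 0 * α 0 := by
  induction Xs generalizing n with
  | nil =>
    simp only [List.nil_append, listProd, bidMul]
    rw [Finset.sum_eq_single 0]
    · rcases eq_or_ne n 0 with h | h
      · simp [Umat, h]
      · simp [Umat, h, Ne.symm h]
    · intro k _ hk
      simp [hk]
    · intro h
      exact absurd (Finset.mem_range.mpr (by omega)) h
  | cons X Xs ih =>
    simp only [List.cons_append, listProd, bidMul]
    rw [Finset.sum_mul]
    exact Finset.sum_congr rfl fun k _ => by
      rw [show listProd (Xs ++ [Umat r α]) k 0 = listProd Xs k 0 * α 0 from ih k, mul_assoc]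

lemma listProd_row0 (Xs : List (ℕ → ℕ → ℂ))
    (h : ∀ X ∈ Xs, X 0 0 = 1 ∧ ∀ k, k ≠ 0 → X 0 k = 0) :
    listProd Xs 0 0 = 1 := by
  induction Xs with
  | nil => simp [listProd]
  | cons X Xs ih =>
    simp only [listProd, bidMul]
    rw [Finset.sum_eq_single 0]
    · rw [(h X List.mem_cons_self).1, one_mul,
        ih fun Y hY => h Y (List.mem_cons_of_mem _ hY)]
    · intro k _ hk
      rw [(h X List.mem_cons_self).2 k hk, zero_mul]
    · intro h'
      exact absurd (Finset.mem_range.mpr (by omega)) h'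

/-- The recurrence matrix of an `(r+1)`-fold symmetric `r`-orthogonal
polynomial sequence (`H_{n,n+1} = 1`, `H_{n+r,n} = γ_n`, other entries `0`)
admits no bidiagonal factorisation `H = L_1 ⋯ L_r U`. -/
theorem stmt11 (r : ℕ) (hr : 1 ≤ r) (γ : ℕ → ℂ) (hγ : ∀ n, γ n ≠ 0) :
    ¬ ∃ α : ℕ → ℂ, ∀ n ℓ,
      (if ℓ = n + 1 then (1 : ℂ) else if n = ℓ + r then γ ℓ else 0)
        = Hprod r α n ℓ := by
  rintro ⟨α, hα⟩
  set Ls := (List.range' 1 r).map fun k => Lmat r k α with hLs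
  have hrow : ∀ X ∈ Ls, X 0 0 = 1 ∧ ∀ k, k ≠ 0 → X 0 k = 0 := by
    intro X hX
    simp only [hLs, List.mem_map] at hX
    obtain ⟨k, _, rfl⟩ := hX
    exact ⟨by simp [Lmat], fun m hm => by simp [Lmat, hm]⟩
  have h00 := hα 0 0
  have hr0 := hα r 0
  rw [Hprod, listProd_append_U, listProd_row0 _ hrow, one_mul] at h00
  rw [Hprod, listProd_append_U] at hr0
  rw [if_neg (by omega), if_neg (by omega)] at h00
  rw [if_neg (by omega), if_pos (by omega), ← h00, mul_zero] at hr0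
  exact hγ 0 hr0
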